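/- For a finite-horizon value function V_τ defined recursively by V_0(x) = 0 and V_{k+1}(x) = max{0, σ(x) + min_{r∈Ω} max_{u∈U} V_k(f(x,r,u))}, if V_∞(x) := sup_τ V_τ(x) is finite for all x, then V_∞ satisfies the fixed-point equation V_∞(x) = max{0, σ(x) + min_{r∈Ω} max_{u∈U} V_∞(f(x,r,u))} and is the minimal nonnegative solution of this equation. -/

import Mathlib

open Filter Topology

/-- If the finite-horizon value functions `V τ` (defined by `V 0 x = 0`
and `V (k+1) x = max 0 (σ x + min_r max_u V k (f x r u))`) have a finite pointwise
supremum `V∞ x = ⨆ τ, V τ x`, then `V∞` satisfies the Bellman fixed-point equation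
and is the minimal nonnegative solution of that equation. -/
theorem value_sup_is_minimal_fixed_point
    {X Ω U : Type*} [Fintype Ω] [Nonempty Ω] [Fintype U] [Nonempty U]
    (f : X → Ω → U → X) (σ : X → ℝ)
    (V : ℕ → X → ℝ)
    (h0 : ∀ x, V 0 x = 0)
    (hrec : ∀ k x, V (k + 1) x =
      max 0 (σ x + Finset.univ.inf' Finset.univ_nonempty (fun r =>
        Finset.univ.sup' Finset.univ_nonempty (fun u => V k (f x r u)))))
    (hbdd : ∀ x, BddAbove (Set.range fun τ => V τ x)) :
    (∀ x, (⨆ τ, V τ x) =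
      max 0 (σ x + Finset.univ.inf' Finset.univ_nonempty (fun r =>
        Finset.univ.sup' Finset.univ_nonempty (fun u => ⨆ τ, V τ (f x r u))))) ∧
    (∀ W : X → ℝ, (∀ x, 0 ≤ W x) →
      (∀ x, W x = max 0 (σ x + Finset.univ.inf' Finset.univ_nonempty (fun r =>
        Finset.univ.sup' Finset.univ_nonempty (fun u => W (f x r u))))) →
      ∀ x, (⨆ τ, V τ x) ≤ W x) := by
  -- monotonicity in τ
  have hstep : ∀ k x, V k x ≤ V (k + 1) x := by
    intro k
    induction k with
    | zero => intro x; rw [h0 x, hrec 0 x]; exact le_max_left _ _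
    | succ k ih =>
      intro x
      rw [hrec k x, hrec (k + 1) x]
      refine max_le_max le_rfl (add_le_add_right ?_ _)
      refine Finset.le_inf' _ _ (fun r hr => ?_)
      exact (Finset.inf'_le _ hr).trans (Finset.sup'_mono_fun (fun u _ => ih _))
  have hmono : ∀ x, Monotone fun τ => V τ x := fun x =>
    monotone_nat_of_le_succ (fun n => hstep n x)
  have hlim : ∀ x, Tendsto (fun τ => V τ x) atTop (𝓝 (⨆ τ, V τ x)) := fun x =>
    tendsto_atTop_ciSup (hmono x) (hbdd x)
  constructor
  · intro x
    have h1 : Tendsto (fun τ => V (τ + 1) x) atTop (𝓝 (⨆ τ, V τ x)) :=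
      (hlim x).comp (tendsto_add_atTop_nat 1)
    have h2 : Tendsto (fun τ => max 0 (σ x + Finset.univ.inf' Finset.univ_nonempty (fun r =>
        Finset.univ.sup' Finset.univ_nonempty (fun u => V τ (f x r u))))) atTop
        (𝓝 (max 0 (σ x + Finset.univ.inf' Finset.univ_nonempty (fun r =>
        Finset.univ.sup' Finset.univ_nonempty (fun u => ⨆ τ, V τ (f x r u)))))) := by
      refine tendsto_const_nhds.max ?_
      refine tendsto_const_nhds.add ?_
      refine Filter.Tendsto.finset_inf'_nhds_apply _ (fun r _ => ?_)
      exact Filter.Tendsto.finset_sup'_nhds_apply _ (fun u _ => hlim (f x r u))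
    have : (fun τ => V (τ + 1) x) = fun τ =>
        max 0 (σ x + Finset.univ.inf' Finset.univ_nonempty (fun r =>
        Finset.univ.sup' Finset.univ_nonempty (fun u => V τ (f x r u)))) := by
      funext τ; exact hrec τ x
    rw [this] at h1
    exact tendsto_nhds_unique h1 h2
  · intro W hW0 hWfix x
    refine ciSup_le (fun τ => ?_)
    induction τ generalizing x with
    | zero => rw [h0 x]; exact hW0 x
    | succ k ih =>
      rw [hrec k x, hWfix x]
      refine max_le_max le_rfl (add_le_add_right ?_ _)
      refine Finset.le_inf' _ _ (fun r hr => ?_)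
      exact (Finset.inf'_le _ hr).trans (Finset.sup'_mono_fun (fun u _ => ih _))
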